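/- Suppose Y*A^π*S = 0 and let k be a natural number with A^(k+1)*A^D = A^k (so k is at least the index of A). Then S has a Drazin inverse, given by S^D = −Σ_{i=0}^{k−1} A^i*A^π*Y*(X^{i+2} − X^{i+3}*Y*A^π) + X − X^2*Y*A^π. -/

import Mathlib

open Matrix Finset

section Helpers

variable {R : Type*} [Ring R]

lemma dz_pow_left (M X : R) (h1 : X * M * X = X) (h2 : M * X = X * M) :
    ∀ j : ℕ, X ^ (j + 1) * M ^ j = X := by
  intro j
  induction j with
  | zero => simp
  | succ j ih =>
      have e0 : X ^ (j + 2) * M ^ (j + 1) = X * (X ^ (j + 1) * M ^ j) * M := by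
        rw [pow_succ' X (j+1), pow_succ M j]; noncomm_ring
      rw [e0, ih]
      calc X * X * M = X * (M * X) := by rw [h2, mul_assoc]
        _ = X := by rw [← mul_assoc, h1]

lemma dz_pow_right (M X : R) (h2 : M * X = X * M) (m : ℕ) (h3 : M ^ (m + 1) * X = M ^ m) :
    ∀ j : ℕ, M ^ (m + j) * X ^ j = M ^ m := by
  have hc : Commute M X := h2
  intro j
  induction j with
  | zero => simp
  | succ j ih =>
      calc M ^ (m + (j+1)) * X ^ (j+1)
          = M ^ (m+j) * (M * X ^ j) * X := by
            rw [show m + (j+1) = (m+j) + 1 by omega, pow_succ M, pow_succ X]; noncomm_ring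
        _ = M ^ (m+j) * (X ^ j * M) * X := by rw [(hc.pow_right j).eq]
        _ = (M ^ (m+j) * X ^ j) * (M * X) := by noncomm_ring
        _ = M ^ m * (M * X) := by rw [ih]
        _ = M ^ (m+1) * X := by rw [pow_succ]; noncomm_ring
        _ = M ^ m := h3

lemma dz_index_up (M X : R) (m : ℕ) (h3 : M ^ (m + 1) * X = M ^ m) :
    ∀ j : ℕ, M ^ (m + j + 1) * X = M ^ (m + j) := by
  intro j
  induction j with
  | zero => exact h3
  | succ j ih =>
      calc M ^ (m + (j+1) + 1) * X = M * (M ^ (m + j + 1) * X) := by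
            rw [show m + (j+1) + 1 = (m+j+1) + 1 by omega, pow_succ' M (m+j+1), mul_assoc]
        _ = M * M ^ (m + j) := by rw [ih]
        _ = M ^ (m + (j+1)) := by rw [show m+(j+1) = (m+j)+1 from rfl, pow_succ' M (m+j)]

lemma dz_unique (M X1 X2 : R) (m : ℕ)
    (h11 : X1 * M * X1 = X1) (h12 : M * X1 = X1 * M) (h13 : M ^ (m + 1) * X1 = M ^ m)
    (h21 : X2 * M * X2 = X2) (h22 : M * X2 = X2 * M) (h23 : M ^ (m + 1) * X2 = M ^ m) :
    X1 = X2 := by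
  have hc1 : Commute M X1 := h12
  have hc2 : Commute M X2 := h22
  have u1 : X1 ^ (m+1) * M ^ m = X1 := dz_pow_left M X1 h11 h12 m
  have u2 : X2 ^ (m+1) * M ^ m = X2 := dz_pow_left M X2 h21 h22 m
  have v1 : M ^ (m + (m+1)) * X1 ^ (m+1) = M ^ m := dz_pow_right M X1 h12 m h13 (m+1)
  have v2 : M ^ (m + (m+1)) * X2 ^ (m+1) = M ^ m := dz_pow_right M X2 h22 m h23 (m+1)
  calc X1 = X1 ^ (m+1) * M ^ m := u1.symm
    _ = X1 ^ (m+1) * (M ^ (m + (m+1)) * X2 ^ (m+1)) := by rw [v2]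
    _ = (X1 ^ (m+1) * M ^ (m + (m+1))) * X2 ^ (m+1) := by rw [mul_assoc]
    _ = (M ^ (m + (m+1)) * X1 ^ (m+1)) * X2 ^ (m+1) := by
          rw [(hc1.pow_pow (m + (m+1)) (m+1)).eq]
    _ = M ^ m * X2 ^ (m+1) := by rw [v1]
    _ = X2 ^ (m+1) * M ^ m := (hc2.pow_pow m (m+1)).eq
    _ = X2 := u2
open Finset

variable {R : Type*} [Ring R]

lemma tri_pow (U W T : R) (hUW : U * W = 0) (hUT : U * T = 0) (hWW : W * W = 0)
    (hWT : W * T = 0) (hTU : T * U = 0) :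
    ∀ j : ℕ, (U + W + T) ^ (j + 1)
      = U ^ (j + 1) + T ^ (j + 1) + ∑ i ∈ Finset.range (j + 1), T ^ (j - i) * W * U ^ i := by
  have hUpW : ∀ i : ℕ, U ^ (i + 1) * W = 0 := by
    intro i; rw [pow_succ, mul_assoc, hUW, mul_zero]
  have hUpT : ∀ i : ℕ, U ^ (i + 1) * T = 0 := by
    intro i; rw [pow_succ, mul_assoc, hUT, mul_zero]
  have hTpU : ∀ i : ℕ, T ^ (i + 1) * U = 0 := by
    intro i; rw [pow_succ, mul_assoc, hTU, mul_zero]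
  have hWUW : ∀ i : ℕ, W * U ^ i * W = 0 := by
    intro i
    cases i with
    | zero => simpa using hWW
    | succ i =>
        rw [pow_succ, show W * (U ^ i * U) * W = W * U ^ i * (U * W) by noncomm_ring,
          hUW, mul_zero]
  have hWUT : ∀ i : ℕ, W * U ^ i * T = 0 := by
    intro i
    cases i with
    | zero => simpa using hWT
    | succ i =>
        rw [pow_succ, show W * (U ^ i * U) * T = W * U ^ i * (U * T) by noncomm_ring,
          hUT, mul_zero]
  intro j
  induction j with
  | zero =>
      simp only [zero_add, pow_one, Finset.sum_range_one, Nat.sub_zero, pow_zero, mul_one, one_mul]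
      abel
  | succ j ih =>
      have step : (U + W + T) ^ (j + 2) = (U + W + T) ^ (j + 1) * (U + W + T) := by
        rw [pow_succ]
      rw [step, ih]
      have expand : (U ^ (j+1) + T ^ (j+1) + ∑ i ∈ range (j+1), T ^ (j-i) * W * U ^ i) * (U + W + T)
          = (U ^ (j+1) * U + U ^ (j+1) * W + U ^ (j+1) * T)
            + (T ^ (j+1) * U + T ^ (j+1) * W + T ^ (j+1) * T)
            + ((∑ i ∈ range (j+1), T ^ (j-i) * W * U ^ i) * U
              + (∑ i ∈ range (j+1), T ^ (j-i) * W * U ^ i) * W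
              + (∑ i ∈ range (j+1), T ^ (j-i) * W * U ^ i) * T) := by
        noncomm_ring
      rw [expand, hUpW j, hUpT j, hTpU j]
      have sU : (∑ i ∈ range (j+1), T ^ (j-i) * W * U ^ i) * U
          = ∑ i ∈ range (j+1), T ^ (j-i) * W * U ^ (i+1) := by
        rw [Finset.sum_mul]
        refine Finset.sum_congr rfl (fun i hi => ?_)
        rw [mul_assoc, ← pow_succ]
      have sW : (∑ i ∈ range (j+1), T ^ (j-i) * W * U ^ i) * W = 0 := by
        rw [Finset.sum_mul]
        refine Finset.sum_eq_zero (fun i hi => ?_)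
        rw [mul_assoc, mul_assoc, ← mul_assoc W, hWUW i, mul_zero]
      have sT : (∑ i ∈ range (j+1), T ^ (j-i) * W * U ^ i) * T = 0 := by
        rw [Finset.sum_mul]
        refine Finset.sum_eq_zero (fun i hi => ?_)
        rw [mul_assoc, mul_assoc, ← mul_assoc W, hWUT i, mul_zero]
      rw [sU, sW, sT]
      have key : ∑ i ∈ range (j+2), T ^ (j+1-i) * W * U ^ i
          = (∑ i ∈ range (j+1), T ^ (j-i) * W * U ^ (i+1)) + T ^ (j+1) * W := by
        rw [Finset.sum_range_succ' (fun i => T ^ (j+1-i) * W * U ^ i) (j+1)]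
        simp [Nat.succ_sub_succ]
      rw [key, ← pow_succ, ← pow_succ]
      noncomm_ring

lemma tri_pow_zero (U W T : R) (hUW : U * W = 0) (hUT : U * T = 0) (hWW : W * W = 0)
    (hWT : W * T = 0) (hTU : T * U = 0) (a b : ℕ)
    (hU : U ^ (a + 1) = 0) (hT : T ^ (b + 1) = 0) :
    (U + W + T) ^ (a + b + 2) = 0 := by
  have e0 := tri_pow U W T hUW hUT hWW hWT hTU (a + b + 1)
  rw [show a + b + 2 = (a + b + 1) + 1 from rfl, e0]
  have h1 : U ^ (a + b + 1 + 1) = 0 := by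
    rw [show a + b + 1 + 1 = (a + 1) + (b + 1) by omega, pow_add, hU, zero_mul]
  have h2 : T ^ (a + b + 1 + 1) = 0 := by
    rw [show a + b + 1 + 1 = (b + 1) + (a + 1) by omega, pow_add, hT, zero_mul]
  have h3 : ∑ i ∈ range (a + b + 1 + 1), T ^ (a + b + 1 - i) * W * U ^ i = 0 := by
    refine Finset.sum_eq_zero (fun i hi => ?_)
    by_cases hc : i ≤ a
    · rw [show a + b + 1 - i = (b + 1) + (a - i) by omega, pow_add, hT, zero_mul,
        zero_mul, zero_mul]
    · rw [show i = (a + 1) + (i - (a + 1)) by omega, pow_add, hU, zero_mul, mul_zero]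
  rw [h1, h2, h3]
  simp

end Helpers

/-- `X` is a Drazin inverse of the square matrix `M`: `X*M*X = X`, `M*X = X*M`,
and `M^(l+1)*X = M^l` for some natural number `l`. -/
def IsDrazinInverse {n : Type*} [Fintype n] [DecidableEq n]
    (M X : Matrix n n ℂ) : Prop :=
  X * M * X = X ∧ M * X = X * M ∧ ∃ l : ℕ, M ^ (l + 1) * X = M ^ l

set_option maxHeartbeats 1000000 in
theorem stmt5
    {p q : Type*} [Fintype p] [DecidableEq p] [Fintype q] [DecidableEq q]
    (A AD : Matrix p p ℂ) (D DD : Matrix q q ℂ)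
    (B : Matrix q p ℂ) (C : Matrix p q ℂ)
    (hA : IsDrazinInverse A AD) (hD : IsDrazinInverse D DD)
    (Y S Ae Aπ SAe : Matrix p p ℂ)
    (hY : Y = C * DD * B) (hS : S = A - Y)
    (hAe : Ae = A * AD) (hAπ : Aπ = 1 - A * AD)
    (hSAe : SAe = Ae * S * Ae)
    (X : Matrix p p ℂ) (hX : IsDrazinInverse SAe X)
    (k : ℕ) (hk : A ^ (k + 1) * AD = A ^ k)
    (hcond : Y * Aπ * S = 0) :
    IsDrazinInverse S
      (-(∑ i ∈ Finset.range k,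
          A ^ i * Aπ * Y * (X ^ (i + 2) - X ^ (i + 3) * Y * Aπ))
        + X - X ^ 2 * Y * Aπ) := by
  obtain ⟨hA1, hA2, -⟩ := hA
  obtain ⟨hX1, hX2, l0, hX3⟩ := hX
  clear hD hY
  -- basic projection facts
  have hAπ' : Aπ = 1 - Ae := by rw [hAπ, hAe]
  have hee : Ae * Ae = Ae := by
    rw [hAe]
    calc A * AD * (A * AD) = A * (AD * A * AD) := by noncomm_ring
      _ = A * AD := by rw [hA1]
  have hcommAe : A * Ae = Ae * A := by
    rw [hAe]
    calc A * (A * AD) = A * (AD * A) := by rw [hA2]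
      _ = A * AD * A := by rw [← mul_assoc]
  have heπ : Ae * Aπ = 0 := by rw [hAπ', mul_sub, mul_one, hee, sub_self]
  have hπe : Aπ * Ae = 0 := by rw [hAπ', sub_mul, one_mul, hee, sub_self]
  have hππ : Aπ * Aπ = Aπ := by
    rw [hAπ']
    have : (1 - Ae) * (1 - Ae) = 1 - Ae - Ae + Ae * Ae := by noncomm_ring
    rw [this, hee]; abel
  have hcommAπ : A * Aπ = Aπ * A := by
    rw [hAπ', mul_sub, sub_mul, mul_one, one_mul, hcommAe]
  have hcommApowπ : ∀ i : ℕ, A ^ i * Aπ = Aπ * A ^ i := fun i =>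
    ((Commute.pow_left (hcommAπ : Commute A Aπ) i).eq)
  have hAkπ : A ^ k * Aπ = 0 := by
    rw [hAπ, mul_sub, mul_one, ← mul_assoc, ← pow_succ, hk, sub_self]
  -- orthogonality helpers
  have orth1 : ∀ u v : Matrix p p ℂ, u * Ae = u → Aπ * v = v → u * v = 0 := by
    intro u v hu hv
    rw [← hu, ← hv, mul_assoc, ← mul_assoc Ae Aπ v, heπ, zero_mul, mul_zero]
  have orth2 : ∀ u v : Matrix p p ℂ, u * Aπ = u → Ae * v = v → u * v = 0 := by
    intro u v hu hv
    rw [← hu, ← hv, mul_assoc, ← mul_assoc Aπ Ae v, hπe, zero_mul, mul_zero]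
  -- SAe basics
  have heM : Ae * SAe = SAe := by rw [hSAe, ← mul_assoc, ← mul_assoc, hee]
  have hMe : SAe * Ae = SAe := by rw [hSAe, mul_assoc, mul_assoc, hee, ← mul_assoc]
  -- index bump
  have hX3' : SAe ^ (l0 + 1 + 1) * X = SAe ^ (l0 + 1) := dz_index_up SAe X l0 hX3 1
  -- X = Ae * X * Ae via uniqueness of the Drazin inverse
  have hMpe : SAe ^ (l0 + 1) * Ae = SAe ^ (l0 + 1) := by
    rw [pow_succ, mul_assoc, hMe]
  have hX1' : X * (SAe * X) = X := by rw [← mul_assoc]; exact hX1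
  have hXe : X = Ae * X * Ae := by
    refine dz_unique SAe X (Ae * X * Ae) (l0 + 1) hX1 hX2 hX3' ?_ ?_ ?_
    · calc Ae * X * Ae * SAe * (Ae * X * Ae)
          = Ae * (X * ((Ae * (SAe * Ae)) * (X * Ae))) := by noncomm_ring
        _ = Ae * ((X * (SAe * X)) * Ae) := by rw [hMe, heM]; noncomm_ring
        _ = Ae * (X * Ae) := by rw [hX1']
        _ = Ae * X * Ae := by rw [mul_assoc]
    · have e1 : SAe * (Ae * X * Ae) = X * SAe := by
        calc SAe * (Ae * X * Ae) = (SAe * Ae) * (X * Ae) := by noncomm_ring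
          _ = (SAe * X) * Ae := by rw [hMe, mul_assoc]
          _ = (X * SAe) * Ae := by rw [hX2]
          _ = X * SAe := by rw [mul_assoc, hMe]
      have e2 : (Ae * X * Ae) * SAe = X * SAe := by
        calc (Ae * X * Ae) * SAe = Ae * (X * (Ae * SAe)) := by noncomm_ring
          _ = Ae * (SAe * X) := by rw [heM, hX2]
          _ = (Ae * SAe) * X := by rw [← mul_assoc]
          _ = X * SAe := by rw [heM, hX2]
      rw [e1, e2]
    · calc SAe ^ (l0 + 1 + 1) * (Ae * X * Ae)
          = (SAe ^ (l0 + 1) * (SAe * Ae)) * (X * Ae) := by rw [pow_succ]; noncomm_ring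
        _ = (SAe ^ (l0 + 1 + 1) * X) * Ae := by rw [hMe, ← pow_succ, ← mul_assoc]
        _ = SAe ^ (l0 + 1) := by rw [hX3', hMpe]
  have hAeX : Ae * X = X := by
    calc Ae * X = Ae * (Ae * X * Ae) := by rw [← hXe]
      _ = (Ae * Ae) * (X * Ae) := by noncomm_ring
      _ = Ae * (X * Ae) := by rw [hee]
      _ = Ae * X * Ae := by rw [← mul_assoc]
      _ = X := hXe.symm
  have hXAe : X * Ae = X := by
    calc X * Ae = (Ae * X * Ae) * Ae := by rw [← hXe]
      _ = (Ae * X) * (Ae * Ae) := by noncomm_ring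
      _ = (Ae * X) * Ae := by rw [hee]
      _ = X := by rw [← hXe]
  -- powers of X and SAe
  have dMXX : SAe * X * X = X := by rw [hX2]; exact hX1
  have dXXM : X * X * SAe = X := by rw [mul_assoc, ← hX2, ← mul_assoc]; exact hX1
  have dpowXM : ∀ i : ℕ, X ^ (i + 2) * SAe = X ^ (i + 1) := by
    intro i
    calc X ^ (i + 2) * SAe = (X ^ i * (X * X)) * SAe := by
          rw [show i + 2 = i + 1 + 1 from rfl, pow_succ, pow_succ]; noncomm_ring
      _ = X ^ i * (X * X * SAe) := by noncomm_ring
      _ = X ^ i * X := by rw [dXXM]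
      _ = X ^ (i + 1) := by rw [← pow_succ]
  have hcommMX : Commute SAe X := hX2
  have dMpowX : ∀ i : ℕ, SAe * X ^ (i + 2) = X ^ (i + 1) := by
    intro i
    rw [(hcommMX.pow_right (i + 2)).eq]
    exact dpowXM i
  -- block components
  obtain ⟨B12, hB12⟩ : ∃ B12, B12 = Ae * S * Aπ := ⟨_, rfl⟩
  obtain ⟨B21, hB21⟩ : ∃ B21, B21 = Aπ * S * Ae := ⟨_, rfl⟩
  obtain ⟨N, hN⟩ : ∃ N, N = Aπ * S * Aπ := ⟨_, rfl⟩
  have hSdec : S = SAe + B12 + B21 + N := by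
    rw [hSAe, hB12, hB21, hN, hAπ']; noncomm_ring
  have hB12Y : B12 = -(Ae * (Y * Aπ)) := by
    rw [hB12, hS]
    calc Ae * (A - Y) * Aπ = (Ae * A) * Aπ - Ae * (Y * Aπ) := by noncomm_ring
      _ = A * (Ae * Aπ) - Ae * (Y * Aπ) := by rw [← hcommAe, mul_assoc]
      _ = -(Ae * (Y * Aπ)) := by rw [heπ, mul_zero, zero_sub]
  have hB21Y : B21 = -(Aπ * (Y * Ae)) := by
    rw [hB21, hS]
    calc Aπ * (A - Y) * Ae = (Aπ * A) * Ae - Aπ * (Y * Ae) := by noncomm_ring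
      _ = A * (Aπ * Ae) - Aπ * (Y * Ae) := by rw [← hcommAπ, mul_assoc]
      _ = -(Aπ * (Y * Ae)) := by rw [hπe, mul_zero, zero_sub]
  -- head/tail projection facts
  have hB12head : Ae * B12 = B12 := by rw [hB12, ← mul_assoc, ← mul_assoc, hee]
  have hB12tail : B12 * Aπ = B12 := by rw [hB12, mul_assoc, mul_assoc, hππ, ← mul_assoc]
  have hB21head : Aπ * B21 = B21 := by rw [hB21, ← mul_assoc, ← mul_assoc, hππ]
  have hB21tail : B21 * Ae = B21 := by rw [hB21, mul_assoc, mul_assoc, hee, ← mul_assoc]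
  have hNhead : Aπ * N = N := by rw [hN, ← mul_assoc, ← mul_assoc, hππ]
  have hNtail : N * Aπ = N := by rw [hN, mul_assoc, mul_assoc, hππ, ← mul_assoc]
  -- key consequence of the hypothesis Y * Aπ * S = 0
  have K : ∀ i : ℕ, Y * Aπ * A ^ i * Aπ * S = 0 := by
    intro i
    induction i with
    | zero =>
        calc Y * Aπ * A ^ 0 * Aπ * S = Y * (Aπ * Aπ) * S := by
              rw [pow_zero, mul_one, mul_assoc Y Aπ Aπ]
          _ = Y * Aπ * S := by rw [hππ, mul_assoc]
          _ = 0 := hcond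
    | succ i ih =>
        have hAY : Y * Aπ * A ^ i * Aπ * A = Y * Aπ * A ^ i * Aπ * Y := by
          have h0 : Y * Aπ * A ^ i * Aπ * A - Y * Aπ * A ^ i * Aπ * Y = 0 := by
            rw [← mul_sub, ← hS]; exact ih
          exact sub_eq_zero.mp h0
        have hπAπ : Aπ * (A * Aπ) = A * Aπ := by
          rw [← mul_assoc, ← hcommAπ, mul_assoc, hππ]
        calc Y * Aπ * A ^ (i + 1) * Aπ * S
            = (Y * Aπ * A ^ i) * (A * Aπ) * S := by rw [pow_succ]; noncomm_ring
          _ = (Y * Aπ * A ^ i) * (Aπ * (A * Aπ)) * S := by rw [hπAπ]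
          _ = (Y * Aπ * A ^ i * Aπ) * A * (Aπ * S) := by noncomm_ring
          _ = (Y * Aπ * A ^ i * Aπ) * Y * (Aπ * S) := by rw [hAY]
          _ = (Y * Aπ * A ^ i * Aπ) * (Y * Aπ * S) := by noncomm_ring
          _ = 0 := by rw [hcond, mul_zero]
  have hKAY : ∀ i : ℕ, Y * Aπ * A ^ i * Aπ * A = Y * Aπ * A ^ i * Aπ * Y := by
    intro i
    have h0 : Y * Aπ * A ^ i * Aπ * A - Y * Aπ * A ^ i * Aπ * Y = 0 := by
      rw [← mul_sub, ← hS]; exact K i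
    exact sub_eq_zero.mp h0
  have hπAiπ : ∀ i : ℕ, Aπ * (A ^ i * Aπ) = A ^ i * Aπ := by
    intro i; rw [← mul_assoc, ← hcommApowπ i, mul_assoc, hππ]
  have hπAe : Aπ * (A * Ae) = 0 := by
    rw [← mul_assoc, ← hcommAπ, mul_assoc, hπe, mul_zero]
  have hB12AB21 : ∀ i : ℕ, B12 * (A ^ i * B21) = 0 := by
    intro i
    rw [hB12Y, hB21Y]
    simp only [mul_neg, neg_mul, neg_neg]
    calc Ae * (Y * Aπ) * (A ^ i * (Aπ * (Y * Ae)))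
        = Ae * ((Y * Aπ * A ^ i * Aπ * Y) * Ae) := by noncomm_ring
      _ = Ae * ((Y * Aπ * A ^ i * Aπ * A) * Ae) := by rw [← hKAY i]
      _ = Ae * ((Y * Aπ * A ^ i) * (Aπ * (A * Ae))) := by noncomm_ring
      _ = 0 := by rw [hπAe, mul_zero, mul_zero]
  have hB12AN : ∀ i : ℕ, B12 * (A ^ i * N) = 0 := by
    intro i
    rw [hB12Y, hN]
    simp only [neg_mul]
    rw [neg_eq_zero]
    calc Ae * (Y * Aπ) * (A ^ i * (Aπ * S * Aπ))
        = Ae * ((Y * Aπ * A ^ i * Aπ * S) * Aπ) := by noncomm_ring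
      _ = 0 := by rw [K i, zero_mul, mul_zero]
  have hB12B21 : B12 * B21 = 0 := by
    have := hB12AB21 0; rwa [pow_zero, one_mul] at this
  have hB12N : B12 * N = 0 := by
    have := hB12AN 0; rwa [pow_zero, one_mul] at this
  have hNB21 : ∀ i : ℕ, N * (A ^ i * B21) = A ^ (i + 1) * B21 := by
    intro i
    have h1 : Aπ * A * (A ^ i * Aπ) = A ^ (i + 1) * Aπ := by
      calc Aπ * A * (A ^ i * Aπ) = A * (Aπ * (A ^ i * Aπ)) := by
            rw [← hcommAπ]; noncomm_ring
        _ = A * (A ^ i * Aπ) := by rw [hπAiπ]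
        _ = A ^ (i + 1) * Aπ := by rw [← mul_assoc, ← pow_succ']
    have h2 : Aπ * (Y * (A ^ i * Aπ) * Y) * Ae = 0 := by
      calc Aπ * (Y * (A ^ i * Aπ) * Y) * Ae
          = Aπ * (Y * (Aπ * (A ^ i * Aπ)) * Y) * Ae := by rw [hπAiπ]
        _ = Aπ * ((Y * Aπ * A ^ i * Aπ * Y) * Ae) := by noncomm_ring
        _ = Aπ * ((Y * Aπ * A ^ i * Aπ * A) * Ae) := by rw [← hKAY i]
        _ = (Aπ * (Y * Aπ * A ^ i)) * (Aπ * (A * Ae)) := by noncomm_ring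
        _ = 0 := by rw [hπAe, mul_zero]
    calc N * (A ^ i * B21)
        = -((Aπ * S) * (Aπ * (A ^ i * Aπ)) * (Y * Ae)) := by
          rw [hN, hB21Y]; noncomm_ring
      _ = -((Aπ * S) * (A ^ i * Aπ) * (Y * Ae)) := by rw [hπAiπ]
      _ = -(Aπ * A * (A ^ i * Aπ) * (Y * Ae)) + Aπ * (Y * (A ^ i * Aπ) * Y) * Ae := by
          rw [hS]; noncomm_ring
      _ = -(A ^ (i + 1) * Aπ * (Y * Ae)) := by rw [h1, h2, add_zero]
      _ = A ^ (i + 1) * B21 := by rw [hB21Y]; noncomm_ring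
  have hSπS : S * (Aπ * S) = A * (Aπ * S) := by
    nth_rewrite 1 [hS]
    rw [sub_mul, show Y * (Aπ * S) = Y * Aπ * S by rw [mul_assoc], hcond, sub_zero]
  have hNN : N * N = A * N := by
    calc N * N = Aπ * S * (Aπ * Aπ) * (S * Aπ) := by rw [hN]; noncomm_ring
      _ = Aπ * (S * (Aπ * S)) * Aπ := by rw [hππ]; noncomm_ring
      _ = Aπ * (A * (Aπ * S)) * Aπ := by rw [hSπS]
      _ = (Aπ * A) * (Aπ * (S * Aπ)) := by noncomm_ring
      _ = A * ((Aπ * Aπ) * (S * Aπ)) := by rw [← hcommAπ]; noncomm_ring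
      _ = A * N := by rw [hππ, hN]; noncomm_ring
  have powN : ∀ m : ℕ, N ^ (m + 1) = A ^ m * N := by
    intro m
    induction m with
    | zero => rw [pow_one, pow_zero, one_mul]
    | succ m ih =>
        rw [pow_succ, ih, mul_assoc, hNN, ← mul_assoc, ← pow_succ]
  have hNk1 : N ^ (k + 1) = 0 := by
    rw [powN k, hN]
    calc A ^ k * (Aπ * S * Aπ) = (A ^ k * Aπ) * (S * Aπ) := by noncomm_ring
      _ = 0 := by rw [hAkπ, zero_mul]
  have hAkB21 : A ^ k * B21 = 0 := by
    rw [hB21]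
    calc A ^ k * (Aπ * S * Ae) = (A ^ k * Aπ) * (S * Ae) := by noncomm_ring
      _ = 0 := by rw [hAkπ, zero_mul]
  obtain ⟨G, hG⟩ : ∃ G, G = ∑ i ∈ Finset.range k, A ^ i * B21 * X ^ (i + 2) := ⟨_, rfl⟩
  have hXpow2Ae : ∀ j : ℕ, X ^ (j + 2) * Ae = X ^ (j + 2) := by
    intro j
    rw [show j + 2 = j + 1 + 1 from rfl, pow_succ, mul_assoc, hXAe]
  have hGhead : Aπ * G = G := by
    rw [hG, Finset.mul_sum]
    refine Finset.sum_congr rfl fun i _ => ?_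
    calc Aπ * (A ^ i * B21 * X ^ (i + 2)) = (Aπ * A ^ i) * B21 * X ^ (i + 2) := by
          noncomm_ring
      _ = A ^ i * (Aπ * B21) * X ^ (i + 2) := by rw [← hcommApowπ i]; noncomm_ring
      _ = A ^ i * B21 * X ^ (i + 2) := by rw [hB21head]
  have hGtail : G * Ae = G := by
    rw [hG, Finset.sum_mul]
    refine Finset.sum_congr rfl fun i _ => ?_
    calc A ^ i * B21 * X ^ (i + 2) * Ae = A ^ i * B21 * (X ^ (i + 2) * Ae) := by
          noncomm_ring
      _ = A ^ i * B21 * X ^ (i + 2) := by rw [hXpow2Ae i]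
  have hB12G : B12 * G = 0 := by
    rw [hG, Finset.mul_sum]
    refine Finset.sum_eq_zero fun i _ => ?_
    calc B12 * (A ^ i * B21 * X ^ (i + 2)) = (B12 * (A ^ i * B21)) * X ^ (i + 2) := by
          noncomm_ring
      _ = 0 := by rw [hB12AB21 i, zero_mul]
  have hGM : G * SAe = ∑ i ∈ Finset.range k, A ^ i * B21 * X ^ (i + 1) := by
    rw [hG, Finset.sum_mul]
    refine Finset.sum_congr rfl fun i _ => ?_
    calc A ^ i * B21 * X ^ (i + 2) * SAe = A ^ i * B21 * (X ^ (i + 2) * SAe) := by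
          noncomm_ring
      _ = A ^ i * B21 * X ^ (i + 1) := by rw [dpowXM i]
  have hGMX : G * SAe * X = G := by
    rw [hGM, hG, Finset.sum_mul]
    refine Finset.sum_congr rfl fun i _ => ?_
    rw [mul_assoc, ← pow_succ]
  have hNG : N * G = G * SAe - B21 * X := by
    have e1 : N * G = ∑ i ∈ Finset.range k, A ^ (i + 1) * B21 * X ^ (i + 1 + 1) := by
      rw [hG, Finset.mul_sum]
      refine Finset.sum_congr rfl fun i _ => ?_
      calc N * (A ^ i * B21 * X ^ (i + 2)) = (N * (A ^ i * B21)) * X ^ (i + 2) := by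
            noncomm_ring
        _ = A ^ (i + 1) * B21 * X ^ (i + 1 + 1) := by rw [hNB21 i]
    have e2 := Finset.sum_range_succ' (fun j => A ^ j * B21 * X ^ (j + 1)) k
    have e3 := Finset.sum_range_succ (fun j => A ^ j * B21 * X ^ (j + 1)) k
    have e4 : A ^ k * B21 * X ^ (k + 1) = 0 := by rw [hAkB21, zero_mul]
    have e5 : A ^ 0 * B21 * X ^ (0 + 1) = B21 * X := by
      rw [pow_zero, one_mul, zero_add, pow_one]
    rw [e1, eq_sub_iff_add_eq, ← e5, ← e2, e3, e4, add_zero, hGM]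
  -- zero products from head/tail structure
  have zMG : SAe * G = 0 := orth1 SAe G hMe hGhead
  have zB21G : B21 * G = 0 := orth1 B21 G hB21tail hGhead
  have zGG : G * G = 0 := orth1 G G hGtail hGhead
  have zXG : X * G = 0 := orth1 X G hXAe hGhead
  have zB12X : B12 * X = 0 := orth2 B12 X hB12tail hAeX
  have zNX : N * X = 0 := orth2 N X hNtail hAeX
  have zXB21 : X * B21 = 0 := orth1 X B21 hXAe hB21head
  have zXN : X * N = 0 := orth1 X N hXAe hNhead
  have zB12M : B12 * SAe = 0 := orth2 B12 SAe hB12tail heM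
  have zNM : N * SAe = 0 := orth2 N SAe hNtail heM
  have zB12B12 : B12 * B12 = 0 := orth2 B12 B12 hB12tail hB12head
  have zGB21 : G * B21 = 0 := orth1 G B21 hGtail hB21head
  have zGN : G * N = 0 := orth1 G N hGtail hNhead
  obtain ⟨Z, hZ⟩ : ∃ Z, Z = X + X ^ 2 * B12 + G + G * (X * B12) := ⟨_, rfl⟩
  have hAπYAe : Aπ * (Y * Ae) = -B21 := by rw [hB21Y, neg_neg]
  have hAeYAπ : Ae * (Y * Aπ) = -B12 := by rw [hB12Y, neg_neg]
  have hAπYX : Aπ * Y * X = -(B21 * X) := by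
    calc Aπ * Y * X = Aπ * Y * (Ae * X) := by rw [hAeX]
      _ = (Aπ * (Y * Ae)) * X := by noncomm_ring
      _ = -(B21 * X) := by rw [hAπYAe]; noncomm_ring
  have hXYAπ : X * Y * Aπ = -(X * B12) := by
    calc X * Y * Aπ = (X * Ae) * Y * Aπ := by rw [hXAe]
      _ = X * (Ae * (Y * Aπ)) := by noncomm_ring
      _ = X * (-B12) := by rw [hAeYAπ]
      _ = -(X * B12) := by noncomm_ring
  have hAeXpow : ∀ j : ℕ, Ae * X ^ (j + 2) = X ^ (j + 2) := by
    intro j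
    rw [show j + 2 = j + 1 + 1 from rfl, pow_succ' X (j + 1), ← mul_assoc, hAeX]
  have hAπYXpow : ∀ j : ℕ, Aπ * Y * X ^ (j + 2) = -(B21 * X ^ (j + 2)) := by
    intro j
    calc Aπ * Y * X ^ (j + 2) = Aπ * Y * (Ae * X ^ (j + 2)) := by rw [hAeXpow j]
      _ = Aπ * (Y * Ae) * X ^ (j + 2) := by
          rw [← mul_assoc (Aπ * Y) Ae (X ^ (j + 2)), mul_assoc Aπ Y Ae]
      _ = -B21 * X ^ (j + 2) := by rw [hAπYAe]
      _ = -(B21 * X ^ (j + 2)) := by rw [neg_mul]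
  have hXYAπ' : X * (Y * Aπ) = -(X * B12) := by rw [← mul_assoc]; exact hXYAπ
  have hXpowXYAπ : ∀ j : ℕ, X ^ (j + 3) * Y * Aπ = -(X ^ (j + 2) * (X * B12)) := by
    intro j
    calc X ^ (j + 3) * Y * Aπ = X ^ (j + 2) * (X * (Y * Aπ)) := by
          rw [show j + 3 = j + 2 + 1 from rfl, pow_succ X (j + 2), mul_assoc, mul_assoc]
      _ = X ^ (j + 2) * (-(X * B12)) := by rw [hXYAπ']
      _ = -(X ^ (j + 2) * (X * B12)) := by rw [mul_neg]
  have hterm : ∀ i : ℕ, A ^ i * Aπ * Y * (X ^ (i + 2) - X ^ (i + 3) * Y * Aπ)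
      = -(A ^ i * B21 * X ^ (i + 2)) - A ^ i * B21 * X ^ (i + 2) * (X * B12) := by
    intro i
    have hre : ∀ V : Matrix p p ℂ, A ^ i * Aπ * Y * V = A ^ i * (Aπ * Y * V) := by
      intro V
      rw [mul_assoc (A ^ i) Aπ Y, mul_assoc (A ^ i) (Aπ * Y) V]
    calc A ^ i * Aπ * Y * (X ^ (i + 2) - X ^ (i + 3) * Y * Aπ)
        = A ^ i * Aπ * Y * X ^ (i + 2) - A ^ i * Aπ * Y * (X ^ (i + 3) * Y * Aπ) := by
          rw [mul_sub]
      _ = A ^ i * (Aπ * Y * X ^ (i + 2)) - A ^ i * Aπ * Y * (-(X ^ (i + 2) * (X * B12))) := by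
          rw [hre, hXpowXYAπ i]
      _ = A ^ i * (-(B21 * X ^ (i + 2))) + A ^ i * (Aπ * Y * (X ^ (i + 2) * (X * B12))) := by
          rw [hAπYXpow i, mul_neg (A ^ i * Aπ * Y) (X ^ (i + 2) * (X * B12)),
            sub_neg_eq_add, hre]
      _ = A ^ i * (-(B21 * X ^ (i + 2))) + A ^ i * ((Aπ * Y * X ^ (i + 2)) * (X * B12)) := by
          rw [← mul_assoc (Aπ * Y) (X ^ (i + 2)) (X * B12)]
      _ = A ^ i * (-(B21 * X ^ (i + 2))) + A ^ i * ((-(B21 * X ^ (i + 2))) * (X * B12)) := by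
          rw [hAπYXpow i]
      _ = -(A ^ i * B21 * X ^ (i + 2)) - A ^ i * B21 * X ^ (i + 2) * (X * B12) := by
          simp only [mul_neg, neg_mul, mul_assoc, ← sub_eq_add_neg]
  have hX2YAπ : X ^ 2 * Y * Aπ = -(X ^ 2 * B12) := by
    calc X ^ 2 * Y * Aπ = X * (X * Y * Aπ) := by rw [pow_two]; noncomm_ring
      _ = X * (-(X * B12)) := by rw [hXYAπ]
      _ = -(X ^ 2 * B12) := by rw [pow_two]; noncomm_ring
  have hZstmt : -(∑ i ∈ Finset.range k,
        A ^ i * Aπ * Y * (X ^ (i + 2) - X ^ (i + 3) * Y * Aπ))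
        + X - X ^ 2 * Y * Aπ = Z := by
    have hsum : ∑ i ∈ Finset.range k, A ^ i * Aπ * Y * (X ^ (i + 2) - X ^ (i + 3) * Y * Aπ)
        = -G - G * (X * B12) := by
      calc ∑ i ∈ Finset.range k, A ^ i * Aπ * Y * (X ^ (i + 2) - X ^ (i + 3) * Y * Aπ)
          = ∑ i ∈ Finset.range k,
              (-(A ^ i * B21 * X ^ (i + 2)) - A ^ i * B21 * X ^ (i + 2) * (X * B12)) :=
            Finset.sum_congr rfl fun i _ => hterm i
        _ = -G - G * (X * B12) := by
            rw [Finset.sum_sub_distrib, Finset.sum_neg_distrib, ← Finset.sum_mul, ← hG]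
    rw [hsum, hX2YAπ, hZ]; abel
  -- expansion identities
  have hSX : S * X = SAe * X + B21 * X := by
    calc S * X = (SAe + B12 + B21 + N) * X := by rw [← hSdec]
      _ = SAe * X + B12 * X + B21 * X + N * X := by noncomm_ring
      _ = SAe * X + B21 * X := by rw [zB12X, zNX]; abel
  have hSG : S * G = G * SAe - B21 * X := by
    calc S * G = (SAe + B12 + B21 + N) * G := by rw [← hSdec]
      _ = SAe * G + B12 * G + B21 * G + N * G := by noncomm_ring
      _ = G * SAe - B21 * X := by rw [zMG, hB12G, zB21G, hNG]; abel
  have hSZ : S * Z = SAe * X + X * B12 + G * SAe + G * B12 := by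
    have c1 : S * (X ^ 2 * B12) = X * B12 + B21 * (X * (X * B12)) := by
      calc S * (X ^ 2 * B12) = (S * X) * (X * B12) := by rw [pow_two]; noncomm_ring
        _ = (SAe * X + B21 * X) * (X * B12) := by rw [hSX]
        _ = (SAe * X * X) * B12 + B21 * (X * (X * B12)) := by noncomm_ring
        _ = X * B12 + B21 * (X * (X * B12)) := by rw [dMXX]
    have c2 : S * (G * (X * B12)) = G * B12 - B21 * (X * (X * B12)) := by
      calc S * (G * (X * B12)) = (S * G) * (X * B12) := by noncomm_ring
        _ = (G * SAe - B21 * X) * (X * B12) := by rw [hSG]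
        _ = (G * SAe * X) * B12 - B21 * (X * (X * B12)) := by noncomm_ring
        _ = G * B12 - B21 * (X * (X * B12)) := by rw [hGMX]
    calc S * Z = S * X + S * (X ^ 2 * B12) + S * G + S * (G * (X * B12)) := by
          rw [hZ]; noncomm_ring
      _ = (SAe * X + B21 * X) + (X * B12 + B21 * (X * (X * B12)))
            + (G * SAe - B21 * X) + (G * B12 - B21 * (X * (X * B12))) := by
          rw [hSX, c1, hSG, c2]
      _ = SAe * X + X * B12 + G * SAe + G * B12 := by abel
  have hXS : X * S = X * SAe + X * B12 := by
    calc X * S = X * (SAe + B12 + B21 + N) := by rw [← hSdec]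
      _ = X * SAe + X * B12 + X * B21 + X * N := by noncomm_ring
      _ = X * SAe + X * B12 := by rw [zXB21, zXN]; abel
  have hB12S : B12 * S = 0 := by
    calc B12 * S = B12 * (SAe + B12 + B21 + N) := by rw [← hSdec]
      _ = B12 * SAe + B12 * B12 + B12 * B21 + B12 * N := by noncomm_ring
      _ = 0 := by rw [zB12M, zB12B12, hB12B21, hB12N]; abel
  have hGS : G * S = G * SAe + G * B12 := by
    calc G * S = G * (SAe + B12 + B21 + N) := by rw [← hSdec]
      _ = G * SAe + G * B12 + G * B21 + G * N := by noncomm_ring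
      _ = G * SAe + G * B12 := by rw [zGB21, zGN]; abel
  have hZS : Z * S = X * SAe + X * B12 + G * SAe + G * B12 := by
    calc Z * S = X * S + X ^ 2 * (B12 * S) + G * S + G * (X * (B12 * S)) := by
          rw [hZ]; noncomm_ring
      _ = X * S + G * S := by rw [hB12S]; simp
      _ = X * SAe + X * B12 + G * SAe + G * B12 := by rw [hXS, hGS]; abel
  have ax2 : S * Z = Z * S := by rw [hSZ, hZS, hX2]
  have ax1 : Z * S * Z = Z := by
    rw [mul_assoc, hSZ]
    have d1 : X * (SAe * X + X * B12 + G * SAe + G * B12) = X + X ^ 2 * B12 := by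
      calc X * (SAe * X + X * B12 + G * SAe + G * B12)
          = X * SAe * X + X * (X * B12) + (X * G) * SAe + (X * G) * B12 := by noncomm_ring
        _ = X + X ^ 2 * B12 := by
            rw [hX1, zXG, zero_mul, zero_mul, add_zero, add_zero, pow_two, mul_assoc]
    have d2 : B12 * (SAe * X + X * B12 + G * SAe + G * B12) = 0 := by
      calc B12 * (SAe * X + X * B12 + G * SAe + G * B12)
          = (B12 * SAe) * X + (B12 * X) * B12 + (B12 * G) * SAe + (B12 * G) * B12 := by
            noncomm_ring
        _ = 0 := by rw [zB12M, zB12X, hB12G]; simp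
    have d3 : G * (SAe * X + X * B12 + G * SAe + G * B12) = G + G * (X * B12) := by
      calc G * (SAe * X + X * B12 + G * SAe + G * B12)
          = G * SAe * X + G * (X * B12) + (G * G) * SAe + (G * G) * B12 := by noncomm_ring
        _ = G + G * (X * B12) := by
            rw [hGMX, zGG, zero_mul, zero_mul, add_zero, add_zero]
    calc Z * (SAe * X + X * B12 + G * SAe + G * B12)
        = X * (SAe * X + X * B12 + G * SAe + G * B12)
          + X ^ 2 * (B12 * (SAe * X + X * B12 + G * SAe + G * B12))
          + G * (SAe * X + X * B12 + G * SAe + G * B12)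
          + G * (X * (B12 * (SAe * X + X * B12 + G * SAe + G * B12))) := by
          rw [hZ]; noncomm_ring
      _ = (X + X ^ 2 * B12) + (G + G * (X * B12)) := by
          rw [d1, d2, d3, mul_zero, mul_zero, mul_zero]; abel
      _ = Z := by rw [hZ]; abel
  -- ================= axiom 3 =================
  obtain ⟨P, hP⟩ : ∃ P, P = 1 - S * Z := ⟨_, rfl⟩
  have hPS : S * P = P * S := by
    have e : S * (S * Z) = S * Z * S := by rw [ax2, ← mul_assoc, ax2]
    rw [hP, mul_sub, sub_mul, mul_one, one_mul, e]
  have hPP : P * P = P := by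
    have ax1' : Z * (S * Z) = Z := by rw [← mul_assoc]; exact ax1
    have e : S * Z * (S * Z) = S * Z := by rw [mul_assoc, ax1']
    rw [hP]
    calc (1 - S * Z) * (1 - S * Z) = 1 - S * Z - S * Z + S * Z * (S * Z) := by noncomm_ring
      _ = 1 - S * Z := by rw [e]; abel
  obtain ⟨U, hU⟩ : ∃ U, U = SAe - SAe * SAe * X := ⟨_, rfl⟩
  obtain ⟨V, hV⟩ : ∃ V, V = B12 - SAe * (X * B12) := ⟨_, rfl⟩
  obtain ⟨W, hW⟩ : ∃ W, W = B21 - G * SAe * SAe := ⟨_, rfl⟩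
  obtain ⟨T, hT⟩ : ∃ T, T = N - G * SAe * B12 := ⟨_, rfl⟩
  obtain ⟨R, hR⟩ : ∃ R, R = U + V + W + T := ⟨_, rfl⟩
  have hSM : S * SAe = SAe * SAe + B21 * SAe := by
    calc S * SAe = (SAe + B12 + B21 + N) * SAe := by rw [← hSdec]
      _ = SAe * SAe + B12 * SAe + B21 * SAe + N * SAe := by noncomm_ring
      _ = SAe * SAe + B21 * SAe := by rw [zB12M, zNM]; abel
  have c1 : S * (SAe * X) = SAe * SAe * X + B21 * (X * SAe) := by
    calc S * (SAe * X) = (S * SAe) * X := by rw [← mul_assoc]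
      _ = (SAe * SAe + B21 * SAe) * X := by rw [hSM]
      _ = SAe * SAe * X + B21 * (SAe * X) := by noncomm_ring
      _ = SAe * SAe * X + B21 * (X * SAe) := by rw [hX2]
  have c2 : S * (X * B12) = SAe * (X * B12) + B21 * (X * B12) := by
    calc S * (X * B12) = (S * X) * B12 := by rw [← mul_assoc]
      _ = (SAe * X + B21 * X) * B12 := by rw [hSX]
      _ = SAe * (X * B12) + B21 * (X * B12) := by noncomm_ring
  have c3 : S * (G * SAe) = G * SAe * SAe - B21 * (X * SAe) := by
    calc S * (G * SAe) = (S * G) * SAe := by rw [← mul_assoc]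
      _ = (G * SAe - B21 * X) * SAe := by rw [hSG]
      _ = G * SAe * SAe - B21 * (X * SAe) := by noncomm_ring
  have c4 : S * (G * B12) = G * SAe * B12 - B21 * (X * B12) := by
    calc S * (G * B12) = (S * G) * B12 := by rw [← mul_assoc]
      _ = (G * SAe - B21 * X) * B12 := by rw [hSG]
      _ = G * SAe * B12 - B21 * (X * B12) := by noncomm_ring
  have hSSZ : S * (S * Z) = SAe * SAe * X + SAe * (X * B12) + G * SAe * SAe + G * SAe * B12 := by
    rw [hSZ]
    simp only [mul_add]
    rw [c1, c2, c3, c4]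
    abel
  have hSPR : S * P = R := by
    rw [hP, mul_sub, mul_one, hSSZ, hR, hU, hV, hW, hT]
    nth_rewrite 1 [hSdec]
    abel
  -- head/tail facts for U V W T
  have hUhead : Ae * U = U := by
    rw [hU, mul_sub, heM, ← mul_assoc, ← mul_assoc, heM]
  have hUtail : U * Ae = U := by
    rw [hU, sub_mul, hMe, mul_assoc, hXAe]
  have hVhead : Ae * V = V := by
    rw [hV, mul_sub, hB12head, ← mul_assoc, heM]
  have hVtail : V * Aπ = V := by
    rw [hV, sub_mul, hB12tail, mul_assoc, mul_assoc, hB12tail]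
  have hWhead : Aπ * W = W := by
    rw [hW, mul_sub, hB21head, ← mul_assoc, ← mul_assoc, hGhead]
  have hWtail : W * Ae = W := by
    rw [hW, sub_mul, hB21tail, mul_assoc, hMe]
  have hThead : Aπ * T = T := by
    rw [hT, mul_sub, hNhead, ← mul_assoc, ← mul_assoc, hGhead]
  have hTtail : T * Aπ = T := by
    rw [hT, sub_mul, hNtail, mul_assoc, hB12tail]
  have hUW : U * W = 0 := orth1 U W hUtail hWhead
  have hUT : U * T = 0 := orth1 U T hUtail hThead
  have hWW : W * W = 0 := orth1 W W hWtail hWhead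
  have hWT : W * T = 0 := orth1 W T hWtail hThead
  have hTU : T * U = 0 := orth2 T U hTtail hUhead
  have hVU : V * U = 0 := orth2 V U hVtail hUhead
  have hVV : V * V = 0 := orth2 V V hVtail hVhead
  have hVW : V * W = 0 := by
    calc V * W = B12 * B21 - (B12 * G) * (SAe * SAe) - SAe * (X * (B12 * B21))
          + SAe * (X * ((B12 * G) * (SAe * SAe))) := by rw [hV, hW]; noncomm_ring
      _ = 0 := by rw [hB12B21, hB12G]; simp
  have hVT : V * T = 0 := by
    calc V * T = B12 * N - (B12 * G) * (SAe * B12) - SAe * (X * (B12 * N))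
          + SAe * (X * ((B12 * G) * (SAe * B12))) := by rw [hV, hT]; noncomm_ring
      _ = 0 := by rw [hB12N, hB12G]; simp
  have hVR : V * R = 0 := by
    rw [hR]
    simp only [mul_add]
    rw [hVU, hVV, hVW, hVT]
    simp
  -- nilpotency of U
  have eX : X * (SAe * SAe * X) = SAe * X := by
    calc X * (SAe * SAe * X) = (X * SAe) * (SAe * X) := by
          rw [← mul_assoc, ← mul_assoc X SAe SAe, mul_assoc (X * SAe) SAe X]
      _ = (SAe * X) * (SAe * X) := by rw [← hX2]
      _ = SAe * X := by rw [mul_assoc, hX1']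
  have powU : ∀ m : ℕ, U ^ (m + 1) = SAe ^ (m + 1) - SAe ^ (m + 2) * X := by
    intro m
    induction m with
    | zero => simp only [zero_add, pow_one]; rw [hU, pow_two]
    | succ m ih =>
        have e2 : SAe ^ (m + 1) * (SAe * SAe * X) = SAe ^ (m + 1 + 2) * X := by
          rw [← mul_assoc, ← mul_assoc, ← pow_succ, ← pow_succ]
        have e3 : (SAe ^ (m + 2) * X) * SAe = SAe ^ (m + 1 + 2) * X := by
          rw [mul_assoc, ← hX2, ← mul_assoc, ← pow_succ]
        have e4 : (SAe ^ (m + 2) * X) * (SAe * SAe * X) = SAe ^ (m + 1 + 2) * X := by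
          rw [mul_assoc, eX, ← mul_assoc, ← pow_succ]
        calc U ^ (m + 1 + 1) = U ^ (m + 1) * U := by rw [pow_succ]
          _ = (SAe ^ (m + 1) - SAe ^ (m + 2) * X) * (SAe - SAe * SAe * X) := by
              rw [ih, hU]
          _ = (SAe ^ (m + 1) * SAe - SAe ^ (m + 1) * (SAe * SAe * X))
              - ((SAe ^ (m + 2) * X) * SAe - (SAe ^ (m + 2) * X) * (SAe * SAe * X)) := by
              rw [sub_mul, mul_sub, mul_sub]
          _ = (SAe ^ (m + 1 + 1) - SAe ^ (m + 1 + 2) * X)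
              - (SAe ^ (m + 1 + 2) * X - SAe ^ (m + 1 + 2) * X) := by
              rw [e2, e3, e4, ← pow_succ]
          _ = SAe ^ (m + 1 + 1) - SAe ^ (m + 1 + 2) * X := by abel
  have hUl : U ^ (l0 + 1) = 0 := by
    rw [powU l0, show l0 + 2 = l0 + 1 + 1 from rfl, hX3', sub_self]
  -- nilpotency of T
  have hGSBN : (G * SAe * B12) * N = 0 := by rw [mul_assoc, hB12N, mul_zero]
  have hGSBGSB : (G * SAe * B12) * (G * SAe * B12) = 0 := by
    calc (G * SAe * B12) * (G * SAe * B12) = (G * SAe) * (B12 * G) * (SAe * B12) := by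
          noncomm_ring
      _ = 0 := by rw [hB12G, mul_zero, zero_mul]
  have powT : ∀ m : ℕ, T ^ (m + 1) = N ^ (m + 1) - N ^ m * (G * SAe * B12) := by
    intro m
    induction m with
    | zero => simp only [zero_add, pow_one, pow_zero, one_mul]; exact hT
    | succ m ih =>
        calc T ^ (m + 1 + 1) = T ^ (m + 1) * T := by rw [pow_succ]
          _ = (N ^ (m + 1) - N ^ m * (G * SAe * B12)) * (N - G * SAe * B12) := by
              rw [ih, hT]
          _ = (N ^ (m + 1) * N - N ^ (m + 1) * (G * SAe * B12))
              - (N ^ m * ((G * SAe * B12) * N) - N ^ m * ((G * SAe * B12) * (G * SAe * B12))) := by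
              rw [sub_mul, mul_sub, mul_sub, mul_assoc (N ^ m) (G * SAe * B12) N,
                mul_assoc (N ^ m) (G * SAe * B12) (G * SAe * B12)]
          _ = N ^ (m + 1 + 1) - N ^ (m + 1) * (G * SAe * B12) := by
              rw [hGSBN, hGSBGSB, mul_zero, ← pow_succ]; abel
  have hTk2 : T ^ (k + 1 + 1) = 0 := by
    rw [powT (k + 1), pow_succ, hNk1, zero_mul, zero_mul, sub_zero]
  -- nilpotency of U + W + T and of R
  have htri : (U + W + T) ^ (l0 + (k + 1) + 2) = 0 :=
    tri_pow_zero U W T hUW hUT hWW hWT hTU l0 (k + 1) hUl hTk2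
  have hRR : R * R = (U + W + T) * R := by
    nth_rewrite 1 [hR]
    simp only [add_mul]
    rw [hVR]
    abel
  have hRpow : ∀ j : ℕ, R ^ (j + 2) = (U + W + T) ^ (j + 1) * R := by
    intro j
    induction j with
    | zero => simp only [zero_add, pow_one]; rw [pow_two, hRR]
    | succ j ih =>
        calc R ^ (j + 1 + 2) = R ^ (j + 2) * R := by rw [← pow_succ]
          _ = ((U + W + T) ^ (j + 1) * R) * R := by rw [ih]
          _ = (U + W + T) ^ (j + 1) * ((U + W + T) * R) := by rw [mul_assoc, hRR]
          _ = (U + W + T) ^ (j + 1 + 1) * R := by rw [← mul_assoc, ← pow_succ]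
  have hRzero : R ^ (l0 + k + 3 + 1) = 0 := by
    have e := hRpow (l0 + k + 2)
    rw [show l0 + k + 3 + 1 = l0 + k + 2 + 2 by omega, e,
      show l0 + k + 2 + 1 = l0 + (k + 1) + 2 by omega, htri, zero_mul]
  have hSPpow : ∀ j : ℕ, S ^ (j + 1) * P = R ^ (j + 1) := by
    intro j
    induction j with
    | zero => simp only [zero_add, pow_one]; exact hSPR
    | succ j ih =>
        have e : R ^ (j + 1 + 1) = S ^ (j + 1 + 1) * P := by
          calc R ^ (j + 1 + 1) = R ^ (j + 1) * R := by rw [pow_succ]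
            _ = (S ^ (j + 1) * P) * (S * P) := by rw [ih, hSPR]
            _ = S ^ (j + 1) * ((P * S) * P) := by noncomm_ring
            _ = S ^ (j + 1) * ((S * P) * P) := by rw [← hPS]
            _ = S ^ (j + 1) * (S * (P * P)) := by rw [mul_assoc]
            _ = S ^ (j + 1) * (S * P) := by rw [hPP]
            _ = S ^ (j + 1 + 1) * P := by rw [← mul_assoc, ← pow_succ]
        exact e.symm
  have hfin : S ^ (l0 + k + 3 + 1) * P = 0 := by
    rw [hSPpow (l0 + k + 3), hRzero]
  have ax3 : S ^ (l0 + k + 3 + 1 + 1) * Z = S ^ (l0 + k + 3 + 1) := by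
    rw [hP, mul_sub, mul_one, ← mul_assoc, ← pow_succ] at hfin
    exact (sub_eq_zero.mp hfin).symm
  rw [hZstmt]
  exact ⟨ax1, ax2, ⟨l0 + k + 3 + 1, ax3⟩⟩
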